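/- Let $n \geq 9$ and let $\delta \in A_n$ be a non-identity permutation whose cycle decomposition contains exactly one $3$-cycle (i.e., in cycle type $[1^t, m_1^{k_1}, \dots, m_r^{k_r}]$ there is $j$ with $m_j = 3$, $k_j = 1$). Then $|C_{A_n}(\delta)|$ divides $|C_{A_n}((1\,2\,3))| = \tfrac{3(n-3)!}{2}$, and hence the conjugacy class size of $(1\,2\,3)$ in $A_n$ divides that of $\delta$. -/

import Mathlib

open Equiv Equiv.Perm Subgroup



/-- The size of the conjugacy class of `g` in `G`. -/
noncomputable def clSize {G : Type*} [Group G] (g : G) : ℕ := Nat.card {x : G // IsConj g x}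

section Aux


section General
variable {G : Type*} [Group G]

/-- centralizer taken inside a subgroup vs intersection in ambient group -/
lemma aux_card_centralizer_subgroup (H : Subgroup G) {g : G} (hg : g ∈ H) :
    Nat.card (Subgroup.centralizer {(⟨g, hg⟩ : H)} : Subgroup H)
      = Nat.card ((Subgroup.centralizer {g} ⊓ H : Subgroup G)) := by
  have h1 : (Subgroup.centralizer {(⟨g, hg⟩ : H)} : Subgroup H)
      = (Subgroup.centralizer {g}).subgroupOf H := by
    ext x
    simp only [Subgroup.mem_centralizer_singleton_iff, Subgroup.mem_subgroupOf,
      Subtype.ext_iff, Subgroup.coe_mul]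
  rw [h1, ← Subgroup.inf_subgroupOf_right]
  exact Nat.card_congr (Subgroup.subgroupOfEquivOfLe inf_le_right).toEquiv

lemma aux_clSize_mul_card_centralizer (g : G) :
    clSize g * Nat.card (Subgroup.centralizer ({g} : Set G)) = Nat.card G := by
  have h1 : clSize g = Nat.card (MulAction.orbit (ConjAct G) g) := by
    refine Nat.card_congr (Equiv.subtypeEquivRight fun x => ?_)
    rw [isConj_comm]
    exact (ConjAct.mem_orbit_conjAct).symm
  rw [h1, Subgroup.nat_card_centralizer_nat_card_stabilizer, ← Nat.card_prod]
  exact Nat.card_congr (MulAction.orbitProdStabilizerEquivGroup (ConjAct G) g)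

end General

section General2
variable {G : Type*} [Group G]

lemma aux_card_inf_conj (A : Subgroup G) [A.Normal] (u g : G) :
    Nat.card ((Subgroup.centralizer {u * g * u⁻¹} ⊓ A : Subgroup G))
      = Nat.card ((Subgroup.centralizer {g} ⊓ A : Subgroup G)) := by
  have hmap : (Subgroup.centralizer {g} ⊓ A).map (MulAut.conj u).toMonoidHom
      = Subgroup.centralizer {u * g * u⁻¹} ⊓ A := by
    ext x
    simp only [Subgroup.mem_map, Subgroup.mem_inf, Subgroup.mem_centralizer_singleton_iff,
      MulEquiv.coe_toMonoidHom, MulAut.conj_apply]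
    constructor
    · rintro ⟨y, ⟨hy1, hy2⟩, rfl⟩
      constructor
      · calc u * y * u⁻¹ * (u * g * u⁻¹) = u * (y * g) * u⁻¹ := by group
          _ = u * (g * y) * u⁻¹ := by rw [hy1]
          _ = u * g * u⁻¹ * (u * y * u⁻¹) := by group
      · exact (Subgroup.Normal.conj_mem ‹A.Normal› y hy2 u)
    · rintro ⟨hx1, hx2⟩
      refine ⟨u⁻¹ * x * u, ⟨?_, ?_⟩, by group⟩
      · have := hx1
        have h2 : x * (u * g * u⁻¹) = (u * g * u⁻¹) * x := hx1
        have : u⁻¹ * (x * (u * g * u⁻¹)) * u = u⁻¹ * ((u * g * u⁻¹) * x) * u := by rw [h2]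
        calc u⁻¹ * x * u * g = u⁻¹ * (x * (u * g * u⁻¹)) * u := by group
          _ = u⁻¹ * ((u * g * u⁻¹) * x) * u := by rw [h2]
          _ = g * (u⁻¹ * x * u) := by group
      · simpa using (Subgroup.Normal.conj_mem ‹A.Normal› x hx2 u⁻¹)
  calc Nat.card ((Subgroup.centralizer {u * g * u⁻¹} ⊓ A : Subgroup G))
      = Nat.card ((Subgroup.centralizer {g} ⊓ A).map (MulAut.conj u).toMonoidHom) := by
        rw [hmap]
    _ = Nat.card ((Subgroup.centralizer {g} ⊓ A : Subgroup G)) :=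
        (Nat.card_congr ((Subgroup.equivMapOfInjective _ _
          (MulAut.conj u).injective).toEquiv)).symm

end General2

section Perm
variable {α : Type*} [DecidableEq α] [Fintype α]

/-- the unique cycle factor of given length -/
lemma aux_unique_factor {δ σ τ : Perm α} (h3 : Multiset.count 3 δ.cycleType = 1)
    (hσ : σ ∈ δ.cycleFactorsFinset) (hσ3 : σ.support.card = 3)
    (hτ : τ ∈ δ.cycleFactorsFinset) (hτ3 : τ.support.card = 3) : σ = τ := by
  rw [cycleType_def, Multiset.count_map] at h3
  rw [Multiset.card_eq_one] at h3
  obtain ⟨c, hc⟩ := h3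
  have hmem : ∀ ρ : Perm α, ρ ∈ δ.cycleFactorsFinset → ρ.support.card = 3 → ρ = c := by
    intro ρ hρ hρ3
    have : ρ ∈ Multiset.filter (fun a => 3 = (Finset.card ∘ support) a)
        δ.cycleFactorsFinset.val := by
      rw [Multiset.mem_filter]
      exact ⟨hρ, by simp [hρ3]⟩
    rw [hc, Multiset.mem_singleton] at this
    exact this
  rw [hmem σ hσ hσ3, hmem τ hτ hτ3]

lemma aux_exists_factor3 {δ : Perm α} (h3 : Multiset.count 3 δ.cycleType = 1) :
    ∃ σ ∈ δ.cycleFactorsFinset, σ.support.card = 3 := by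
  have : (3 : ℕ) ∈ δ.cycleType := by
    rw [← Multiset.count_pos, h3]; norm_num
  rw [cycleType_def, Multiset.mem_map] at this
  obtain ⟨σ, hσ, hσ3⟩ := this
  exact ⟨σ, hσ, hσ3⟩

/-- centralizer of δ is contained in centralizer of its unique 3-cycle factor -/
lemma aux_centralizer_le {δ σ : Perm α} (h3 : Multiset.count 3 δ.cycleType = 1)
    (hσ : σ ∈ δ.cycleFactorsFinset) (hσ3 : σ.support.card = 3) :
    Subgroup.centralizer {δ} ≤ Subgroup.centralizer {σ} := by
  intro x hx
  rw [Subgroup.mem_centralizer_singleton_iff] at hx ⊢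
  have hδ : ConjAct.toConjAct x • δ = δ := by
    rw [ConjAct.toConjAct_smul]
    rw [mul_inv_eq_iff_eq_mul, hx]
  have h1 : ConjAct.toConjAct x • σ ∈ δ.cycleFactorsFinset := by
    rw [← hδ]
    exact (mem_cycleFactorsFinset_conj' (ConjAct.toConjAct x) δ σ).mpr hσ
  have h2 : (ConjAct.toConjAct x • σ).support.card = 3 := by
    rw [ConjAct.toConjAct_smul]
    rw [card_support_conj, hσ3]
  have := aux_unique_factor h3 hσ hσ3 h1 h2
  rw [ConjAct.toConjAct_smul] at this
  rw [eq_comm, mul_inv_eq_iff_eq_mul] at this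
  exact this
end Perm

section Card
variable {α : Type*} [DecidableEq α] [Fintype α]

lemma aux_support_ofSubtype_disj (γ : Perm α) (τ : Perm {x : α // x ∉ γ.support}) :
    _root_.Disjoint γ.support (ofSubtype τ).support := by
  rw [support_ofSubtype]
  rw [Finset.disjoint_left]
  intro a ha hmem
  simp only [Finset.mem_map, Function.Embedding.coe_subtype, Subtype.exists] at hmem
  obtain ⟨b, hb, _, rfl⟩ := hmem
  exact hb ha

lemma aux_card_centralizer_cycle3 {γ : Perm α} (hγ : γ.cycleType = {3}) :
    Nat.card (Subgroup.centralizer ({γ} : Set (Perm α)))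
      = 3 * Nat.factorial (Fintype.card α - 3) := by
  have hcyc : γ.IsCycle := card_cycleType_eq_one.mp (by rw [hγ]; rfl)
  have hsupp : γ.support.card = 3 := by rw [← sum_cycleType, hγ]; rfl
  -- the homomorphism
  have comm : ∀ (z : Subgroup.zpowers γ) (τ : Perm {x : α // x ∉ γ.support}),
      Commute ((Subgroup.zpowers γ).subtype z) (ofSubtype τ) := by
    rintro ⟨z, hz⟩ τ
    obtain ⟨k, rfl⟩ := Subgroup.mem_zpowers_iff.mp hz
    apply Equiv.Perm.Disjoint.commute
    rw [disjoint_iff_disjoint_support]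
    exact Finset.disjoint_of_subset_left (support_zpow_le γ k) (aux_support_ofSubtype_disj γ τ)
  set φ : (Subgroup.zpowers γ) × Perm {x : α // x ∉ γ.support} →* Perm α :=
    MonoidHom.noncommCoprod (Subgroup.zpowers γ).subtype ofSubtype comm with hφ
  have hφ_apply : ∀ z τ, φ (z, τ) = (z : Perm α) * ofSubtype τ := fun _ _ => rfl
  -- injective
  have hinj : Function.Injective φ := by
    rw [injective_iff_map_eq_one]
    rintro ⟨⟨z, hz⟩, τ⟩ h1
    rw [hφ_apply] at h1
    have hz1 : z = 1 := by
      ext a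
      by_cases ha : a ∈ γ.support
      · have h2 : ofSubtype τ a = a :=
          ofSubtype_apply_of_not_mem τ (by simpa using ha)
        have := DFunLike.congr_fun h1 a
        simpa [h2] using this
      · obtain ⟨k, rfl⟩ := Subgroup.mem_zpowers_iff.mp hz
        have : a ∉ (γ ^ k).support := fun h => ha (support_zpow_le γ k h)
        simpa using notMem_support.mp this
    have hτ1 : ofSubtype τ = 1 := by
      have h1' : z * ofSubtype τ = 1 := h1
      rw [hz1, one_mul] at h1'; exact h1'
    have : τ = 1 := by
      ext a
      have := DFunLike.congr_fun hτ1 (a : α)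
      rw [ofSubtype_apply_coe] at this
      simpa using this
    simp [Prod.ext_iff, hz1, this]
  -- range
  have hrange : φ.range = Subgroup.centralizer ({γ} : Set (Perm α)) := by
    apply le_antisymm
    · rintro x ⟨⟨⟨z, hz⟩, τ⟩, rfl⟩
      rw [Subgroup.mem_centralizer_singleton_iff, hφ_apply]
      obtain ⟨k, rfl⟩ := Subgroup.mem_zpowers_iff.mp hz
      have c1 : Commute (γ ^ k) γ := (Commute.refl γ).zpow_left k
      have c2 : Commute (ofSubtype τ) γ := by
        apply Equiv.Perm.Disjoint.commute
        rw [disjoint_iff_disjoint_support]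
        exact (aux_support_ofSubtype_disj γ τ).symm
      exact (c1.mul_left c2).eq
    · intro g hg
      rw [Subgroup.mem_centralizer_singleton_iff] at hg
      have hcomm : Commute g γ := hg
      obtain ⟨hc', hz⟩ := hcyc.commute_iff.mp hcomm
      have hc'' : ∀ x : α, g x ∉ γ.support ↔ x ∉ γ.support := fun x => not_iff_not.mpr (hc' x)
      refine ⟨⟨⟨ofSubtype (g.subtypePerm hc'), hz⟩, g.subtypePerm hc''⟩, ?_⟩
      rw [hφ_apply]
      ext a
      by_cases ha : a ∈ γ.support
      · have h2 : ofSubtype (g.subtypePerm (p := fun x => x ∉ γ.support) hc'') a = a :=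
          ofSubtype_apply_of_not_mem _ (by simpa using ha)
        simp only [Perm.mul_apply, h2]
        rw [ofSubtype_apply_of_mem (g.subtypePerm hc') ha, subtypePerm_apply]
      · have h2 : ofSubtype (g.subtypePerm (p := fun x => x ∉ γ.support) hc'') a = g a := by
          rw [ofSubtype_apply_of_mem (g.subtypePerm hc'') ha, subtypePerm_apply]
        simp only [Perm.mul_apply, h2]
        exact ofSubtype_apply_of_not_mem _ ((hc'' a).mpr ha)
  -- count
  have h1 : Nat.card (Subgroup.centralizer ({γ} : Set (Perm α)))
      = Nat.card ((Subgroup.zpowers γ) × Perm {x : α // x ∉ γ.support}) := by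
    rw [← hrange]
    exact (Nat.card_congr (Equiv.ofInjective _ hinj)).symm
  rw [h1, Nat.card_prod, Nat.card_zpowers]
  have horder : orderOf γ = 3 := by rw [← lcm_cycleType, hγ]; rfl
  have hcard : Nat.card (Perm {x : α // x ∉ γ.support}) = Nat.factorial (Fintype.card α - 3) := by
    rw [Nat.card_eq_fintype_card, Fintype.card_perm]
    congr 1
    rw [Fintype.card_subtype_compl, ← hsupp]
    congr 1
    exact Fintype.card_coe γ.support
  rw [horder, hcard]

end Card

section Index2
variable {α : Type*} [DecidableEq α] [Fintype α]

lemma aux_card_subgroupOf {G : Type*} [Group G] (A K : Subgroup G) :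
    Nat.card (A.subgroupOf K) = Nat.card ((A ⊓ K : Subgroup G)) := by
  rw [← Subgroup.inf_subgroupOf_right]
  exact Nat.card_congr (Subgroup.subgroupOfEquivOfLe inf_le_right).toEquiv

lemma aux_two_mul_card {γ : Perm α} {a b : α} (hne : a ≠ b)
    (ha : a ∉ γ.support) (hb : b ∉ γ.support) :
    2 * Nat.card ((Subgroup.centralizer {γ} ⊓ alternatingGroup α : Subgroup (Perm α)))
      = Nat.card (Subgroup.centralizer ({γ} : Set (Perm α))) := by
  set C := Subgroup.centralizer ({γ} : Set (Perm α)) with hC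
  set f : C →* ℤˣ := Equiv.Perm.sign.comp C.subtype with hf
  have hswap : Equiv.swap a b ∈ C := by
    rw [hC, Subgroup.mem_centralizer_singleton_iff]
    apply Commute.eq
    apply Equiv.Perm.Disjoint.commute
    rw [disjoint_iff_disjoint_support, support_swap hne]
    rw [Finset.disjoint_left]
    intro x hx
    simp only [Finset.mem_insert, Finset.mem_singleton] at hx
    rcases hx with rfl | rfl
    · exact ha
    · exact hb
  have hsurj : Function.Surjective f := by
    intro u
    rcases Int.units_eq_one_or u with rfl | rfl
    · exact ⟨1, by simp [hf]⟩
    · exact ⟨⟨Equiv.swap a b, hswap⟩, by simp [hf, sign_swap hne]⟩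
  have hker : f.ker = (alternatingGroup α).subgroupOf C := by
    ext x
    simp [hf, MonoidHom.mem_ker, Subgroup.mem_subgroupOf, mem_alternatingGroup]
  have h1 : Nat.card C = Nat.card (C ⧸ f.ker) * Nat.card f.ker :=
    Subgroup.card_eq_card_quotient_mul_card_subgroup f.ker
  have h2 : Nat.card (C ⧸ f.ker) = 2 := by
    rw [Nat.card_congr (QuotientGroup.quotientKerEquivOfSurjective f hsurj).toEquiv,
      Nat.card_eq_fintype_card, Fintype.card_units_int]
  have h3 : Nat.card f.ker = Nat.card ((C ⊓ alternatingGroup α : Subgroup (Perm α))) := by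
    rw [hker, aux_card_subgroupOf, inf_comm]
  rw [h1, h2, h3]

end Index2

end Aux

theorem statement_15 (n : ℕ) (hn : 9 ≤ n) (δ : Equiv.Perm (Fin n))
    (hδA : δ ∈ alternatingGroup (Fin n)) (hδ1 : δ ≠ 1)
    (h3 : Multiset.count 3 δ.cycleType = 1)
    (γ : Equiv.Perm (Fin n)) (hγA : γ ∈ alternatingGroup (Fin n))
    (hγ : γ.cycleType = {3}) :
    2 * Nat.card (Subgroup.centralizer {(⟨γ, hγA⟩ : alternatingGroup (Fin n))} :
        Subgroup (alternatingGroup (Fin n))) = 3 * Nat.factorial (n - 3) ∧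
    Nat.card (Subgroup.centralizer {(⟨δ, hδA⟩ : alternatingGroup (Fin n))} :
        Subgroup (alternatingGroup (Fin n))) ∣
      Nat.card (Subgroup.centralizer {(⟨γ, hγA⟩ : alternatingGroup (Fin n))} :
        Subgroup (alternatingGroup (Fin n))) ∧
    clSize (⟨γ, hγA⟩ : alternatingGroup (Fin n)) ∣
      clSize (⟨δ, hδA⟩ : alternatingGroup (Fin n)) := by
  have hcardFin : Fintype.card (Fin n) = n := Fintype.card_fin n
  have hγsupp : γ.support.card = 3 := by rw [← sum_cycleType, hγ]; rfl
  -- two points outside the support of γ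
  have hlt : 1 < γ.supportᶜ.card := by
    rw [Finset.card_compl, hγsupp, hcardFin]; omega
  obtain ⟨a, ha, b, hb, hne⟩ := Finset.one_lt_card.mp hlt
  rw [Finset.mem_compl] at ha hb
  -- Part 1
  have p1 : 2 * Nat.card (Subgroup.centralizer {(⟨γ, hγA⟩ : alternatingGroup (Fin n))} :
      Subgroup (alternatingGroup (Fin n))) = 3 * Nat.factorial (n - 3) := by
    rw [aux_card_centralizer_subgroup _ hγA, aux_two_mul_card hne ha hb,
      aux_card_centralizer_cycle3 hγ, hcardFin]
  -- Part 2
  obtain ⟨σ, hσmem, hσ3⟩ := aux_exists_factor3 h3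
  have hcyc : σ.IsCycle := (mem_cycleFactorsFinset_iff.mp hσmem).1
  have hσT : σ.cycleType = {3} := by rw [hcyc.cycleType, hσ3]
  have hconj : IsConj σ γ := isConj_iff_cycleType_eq.mpr (hσT.trans hγ.symm)
  obtain ⟨u, hu⟩ := isConj_iff.mp hconj
  have p2 : Nat.card (Subgroup.centralizer {(⟨δ, hδA⟩ : alternatingGroup (Fin n))} :
      Subgroup (alternatingGroup (Fin n))) ∣
      Nat.card (Subgroup.centralizer {(⟨γ, hγA⟩ : alternatingGroup (Fin n))} :
      Subgroup (alternatingGroup (Fin n))) := by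
    rw [aux_card_centralizer_subgroup _ hδA, aux_card_centralizer_subgroup _ hγA]
    have hle : Subgroup.centralizer {δ} ⊓ alternatingGroup (Fin n)
        ≤ Subgroup.centralizer {σ} ⊓ alternatingGroup (Fin n) :=
      inf_le_inf_right _ (aux_centralizer_le h3 hσmem hσ3)
    have hdvd := Subgroup.card_dvd_of_le hle
    have hcard : Nat.card ((Subgroup.centralizer {γ} ⊓ alternatingGroup (Fin n) :
        Subgroup (Perm (Fin n)))) = Nat.card ((Subgroup.centralizer {σ} ⊓ alternatingGroup (Fin n) :
        Subgroup (Perm (Fin n)))) := by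
      rw [← hu]
      exact aux_card_inf_conj (alternatingGroup (Fin n)) u σ
    rwa [← hcard] at hdvd
  -- Part 3
  refine ⟨p1, p2, ?_⟩
  obtain ⟨d, hd⟩ := p2
  have e1 := aux_clSize_mul_card_centralizer (⟨γ, hγA⟩ : alternatingGroup (Fin n))
  have e2 := aux_clSize_mul_card_centralizer (⟨δ, hδA⟩ : alternatingGroup (Fin n))
  have hpos : 0 < Nat.card (Subgroup.centralizer {(⟨δ, hδA⟩ : alternatingGroup (Fin n))} :
      Subgroup (alternatingGroup (Fin n))) := Nat.card_pos
  refine ⟨d, ?_⟩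
  have : clSize (⟨γ, hγA⟩ : alternatingGroup (Fin n)) * d *
      Nat.card (Subgroup.centralizer {(⟨δ, hδA⟩ : alternatingGroup (Fin n))} :
      Subgroup (alternatingGroup (Fin n)))
      = clSize (⟨δ, hδA⟩ : alternatingGroup (Fin n)) *
      Nat.card (Subgroup.centralizer {(⟨δ, hδA⟩ : alternatingGroup (Fin n))} :
      Subgroup (alternatingGroup (Fin n))) := by
    rw [e2, ← e1, hd]; ring
  exact (Nat.eq_of_mul_eq_mul_right hpos this).symm
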